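/- Banach frames transfer from any larger solid space to Θ̃: let S be a linear subspace of the real sequences with a norm N_Θ which is solid (if c ∈ S and |d_i| ≤ |c_i| for all i then d ∈ S and N_Θ(d) ≤ N_Θ(c)), let B > 0 satisfy {g_i(f)}_{i∈ℕ} ∈ S and N_Θ({g_i(f)}) ≤ B·‖f‖ for all f ∈ X, and let V : S → X be a linear map with ‖V(c)‖ ≤ K·N_Θ(c) for all c ∈ S and V({g_i(f)}) = f for all f ∈ X. Then Θ̃ ⊆ S, ‖V(c)‖ ≤ K·B·N(c) for every c ∈ Θ̃, and V({g_i(f)}) = f for all f ∈ X; that is, V restricts to a reconstruction operator bounded with respect to N. -/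

import Mathlib

noncomputable section

open Set

/-- `M^c`: the set of `f ∈ X` with `|c i| ≤ |g i (f)|` for all `i`. -/
def MSet {X : Type*} [NormedAddCommGroup X] [NormedSpace ℝ X]
    (g : ℕ → X →L[ℝ] ℝ) (c : ℕ → ℝ) : Set X :=
  {f | ∀ i, |c i| ≤ |g i f|}

/-- `Θ̃`: the set of scalar sequences `c` with `M^c ≠ ∅`. -/
def ThetaT {X : Type*} [NormedAddCommGroup X] [NormedSpace ℝ X]
    (g : ℕ → X →L[ℝ] ℝ) : Set (ℕ → ℝ) :=
  {c | (MSet g c).Nonempty}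

/-- `N(c) = inf{‖f‖ : f ∈ M^c}`. -/
def NN {X : Type*} [NormedAddCommGroup X] [NormedSpace ℝ X]
    (g : ℕ → X →L[ℝ] ℝ) (c : ℕ → ℝ) : ℝ :=
  sInf ((fun f => ‖f‖) '' MSet g c)

theorem banach_frame_transfers_to_thetaT
    {X : Type*} [NormedAddCommGroup X] [NormedSpace ℝ X] [CompleteSpace X]
    (g : ℕ → X →L[ℝ] ℝ)
    (S : Submodule ℝ (ℕ → ℝ)) (NΘ : (ℕ → ℝ) → ℝ)
    -- `NΘ` is a norm on `S`:
    (hNadd : ∀ c ∈ S, ∀ d ∈ S, NΘ (c + d) ≤ NΘ c + NΘ d)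
    (hNsmul : ∀ (r : ℝ), ∀ c ∈ S, NΘ (r • c) = |r| * NΘ c)
    (hNdef : ∀ c ∈ S, NΘ c = 0 → c = 0)
    -- `S` is solid:
    (hsolid : ∀ c ∈ S, ∀ d : ℕ → ℝ, (∀ i, |d i| ≤ |c i|) → d ∈ S ∧ NΘ d ≤ NΘ c)
    -- Bessel property with bound `B`:
    (B : ℝ) (hB : 0 < B)
    (hmem : ∀ f : X, (fun i => g i f) ∈ S)
    (hbd : ∀ f : X, NΘ (fun i => g i f) ≤ B * ‖f‖)
    -- bounded linear reconstruction operator `V : S → X`: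
    (V : S →ₗ[ℝ] X) (K : ℝ)
    (hVbd : ∀ c : S, ‖V c‖ ≤ K * NΘ c)
    (hVrec : ∀ f : X, V ⟨fun i => g i f, hmem f⟩ = f) :
    ∃ hsub : ThetaT g ⊆ S,
      (∀ c : ℕ → ℝ, ∀ hc : c ∈ ThetaT g, ‖V ⟨c, hsub hc⟩‖ ≤ K * B * NN g c) ∧
      (∀ f : X, V ⟨fun i => g i f, hmem f⟩ = f) := by
  have hN0 : NΘ 0 = 0 := by
    have := hNsmul 0 0 S.zero_mem
    simpa using this
  have hNnn : ∀ c ∈ S, 0 ≤ NΘ c := by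
    intro c hc
    have hneg : NΘ (-c) = NΘ c := by
      have := hNsmul (-1) c hc
      simpa using this
    have hadd := hNadd c hc (-c) (S.neg_mem hc)
    rw [add_neg_cancel, hN0, hneg] at hadd
    linarith
  have hsub : ThetaT g ⊆ (S : Set (ℕ → ℝ)) := by
    intro c hc
    obtain ⟨f, hf⟩ := hc
    exact (hsolid _ (hmem f) c hf).1
  refine ⟨hsub, ?_, hVrec⟩
  intro c hc
  obtain ⟨f0, hf0⟩ := hc
  have hcS : c ∈ S := hsub ⟨f0, hf0⟩
  have key : ∀ f ∈ MSet g c, NΘ c ≤ B * ‖f‖ := fun f hf =>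
    le_trans (hsolid _ (hmem f) c hf).2 (hbd f)
  have hVle : ‖V ⟨c, hsub ⟨f0, hf0⟩⟩‖ ≤ K * NΘ c := hVbd _
  have hsne : ((fun f : X => ‖f‖) '' MSet g c).Nonempty := ⟨‖f0‖, f0, hf0, rfl⟩
  have hsbd : BddBelow ((fun f : X => ‖f‖) '' MSet g c) := by
    refine ⟨0, ?_⟩
    rintro x ⟨f, -, rfl⟩
    exact norm_nonneg f
  have hNNnn : 0 ≤ NN g c := by
    apply le_csInf hsne
    rintro x ⟨f, -, rfl⟩
    exact norm_nonneg f
  rcases le_or_gt 0 K with hK | hK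
  · refine le_of_forall_pos_le_add ?_
    intro ε hε
    have hKB : 0 ≤ K * B := mul_nonneg hK hB.le
    have hKB1 : (0:ℝ) < K * B + 1 := by linarith
    have hδ : 0 < ε / (K * B + 1) := by positivity
    obtain ⟨x, hxmem, hx⟩ :=
      exists_lt_of_csInf_lt hsne (lt_add_of_pos_right (NN g c) hδ)
    obtain ⟨f, hf, rfl⟩ := hxmem
    have hδe : (K * B + 1) * (ε / (K * B + 1)) = ε := mul_div_cancel₀ ε hKB1.ne'
    have h1 : ‖V ⟨c, hsub ⟨f0, hf0⟩⟩‖ ≤ K * B * ‖f‖ := by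
      refine le_trans hVle ?_
      have := key f hf
      nlinarith [hNnn c hcS, norm_nonneg f]
    nlinarith [h1, hx, hNNnn]
  · have h0 : NΘ c = 0 := by
      have h2 := hNnn c hcS
      nlinarith [norm_nonneg (V ⟨c, hsub ⟨f0, hf0⟩⟩), hVle]
    have hc0 : c = 0 := hNdef c hcS h0
    subst hc0
    have hVz : (⟨(0 : ℕ → ℝ), hsub ⟨f0, hf0⟩⟩ : S) = 0 := rfl
    rw [hVz, map_zero, norm_zero]
    have h0mem : (0 : X) ∈ MSet g 0 := by
      intro i
      simp [MSet]
    have hle : NN g 0 ≤ 0 := csInf_le hsbd ⟨0, h0mem, norm_zero⟩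
    have heq : NN g 0 = 0 := le_antisymm hle hNNnn
    simp [heq]
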